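/- For every L > 0, with d_L = arccos(√(2/(1 + √(1 + (2π/L)²)))), the inequality π²·cos⁴(y) + L²·(2·cos²(y) − 1) ≥ 0 holds for all y with 0 ≤ y ≤ d_L. -/

import Mathlib

open Real

theorem cos_pow_ineq (L y : ℝ) (hL : 0 < L) (hy0 : 0 ≤ y)
    (hy : y ≤ Real.arccos (Real.sqrt (2 / (1 + Real.sqrt (1 + (2 * π / L) ^ 2))))) :
    π ^ 2 * Real.cos y ^ 4 + L ^ 2 * (2 * Real.cos y ^ 2 - 1) ≥ 0 := by
  set R := Real.sqrt (1 + (2 * π / L) ^ 2) with hRdef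
  have hR1 : 1 ≤ R := by
    rw [hRdef]
    nlinarith [Real.sq_sqrt (by positivity : (0:ℝ) ≤ 1 + (2 * π / L) ^ 2),
      Real.sqrt_nonneg (1 + (2 * π / L) ^ 2), sq_nonneg (2 * π / L)]
  have hR2 : R ^ 2 = 1 + (2 * π / L) ^ 2 := Real.sq_sqrt (by positivity)
  have hRpos : (0:ℝ) < 1 + R := by linarith
  set s := Real.sqrt (2 / (1 + R)) with hsdef
  have hs0 : 0 ≤ s := Real.sqrt_nonneg _
  have hs1 : s ≤ 1 := by
    rw [hsdef]
    have : Real.sqrt (2 / (1 + R)) ≤ Real.sqrt 1 :=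
      Real.sqrt_le_sqrt (by rw [div_le_one hRpos]; linarith)
    simpa using this
  have hcos : s ≤ Real.cos y := by
    have := Real.cos_le_cos_of_nonneg_of_le_pi hy0 (Real.arccos_le_pi s) hy
    rwa [Real.cos_arccos (by linarith) hs1] at this
  have hs2 : s ^ 2 = 2 / (1 + R) := Real.sq_sqrt (by positivity)
  have hc2 : 2 / (1 + R) ≤ Real.cos y ^ 2 := by
    rw [← hs2]
    exact pow_le_pow_left₀ hs0 hcos 2
  have hkey : (1 + R) * Real.cos y ^ 2 - 2 ≥ 0 := by
    have := (div_le_iff₀ hRpos).mp hc2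
    linarith
  have hpi : L ^ 2 * R ^ 2 = L ^ 2 + 4 * π ^ 2 := by
    field_simp [hR2]
    rw [hR2]
    field_simp
    ring
  have ht : 0 ≤ Real.cos y ^ 2 := sq_nonneg _
  nlinarith [sq_nonneg ((1 + R) * Real.cos y ^ 2 - 2), mul_nonneg hkey ht,
    mul_nonneg (mul_nonneg (sub_nonneg.2 hR1) ht) ht, sq_nonneg L, sq_nonneg π,
    mul_nonneg (mul_nonneg (sq_nonneg L) hkey) ht, sq_nonneg (L * Real.cos y),
    mul_nonneg (sq_nonneg L) hkey]
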